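/- Let F = (p,q) : ℝ² → ℝ² be Pinchuk's map and let C = Φ(ℝ) ⊆ ℝ² where Φ(s) = (s² + 2s, u(s² + s, s)). Then for every point v ∈ C \ {(−1,0), (0,0)}, the fiber F⁻¹(v) has exactly 1 element. -/

import Mathlib

noncomputable section

/-- The Pinchuk auxiliary polynomial `t = xy - 1`. -/
def pT (x y : ℝ) : ℝ := x * y - 1

/-- The Pinchuk auxiliary polynomial `h = t(xt + 1)`. -/
def pH (x y : ℝ) : ℝ := pT x y * (x * pT x y + 1)

/-- The Pinchuk auxiliary polynomial `f = (xt+1)^2 (t^2 + y)`. -/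
def pF (x y : ℝ) : ℝ := (x * pT x y + 1) ^ 2 * ((pT x y) ^ 2 + y)

/-- The Pinchuk polynomial `u(f,h)`. -/
def pU (f h : ℝ) : ℝ :=
  (1/4) * f * (75*f^3 + 300*f^2*h + 450*f*h^2 + 276*f^2 + 828*f*h + 48*h^2 + 364*f + 48*h)

/-- Pinchuk's map `F = (p, q) : ℝ² → ℝ²` with `p = f + h` and
    `q = -t² - 6th(h+1) + u(f,h)`. -/
def pinchuk : ℝ × ℝ → ℝ × ℝ := fun v =>
  (pF v.1 v.2 + pH v.1 v.2,
   -(pT v.1 v.2)^2 - 6 * pT v.1 v.2 * pH v.1 v.2 * (pH v.1 v.2 + 1)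
     + pU (pF v.1 v.2) (pH v.1 v.2))

/-- The parameterization `Φ(s) = (s² + 2s, u(s² + s, s))`. -/
def Phi (s : ℝ) : ℝ × ℝ := (s^2 + 2*s, pU (s^2 + s) s)

/-- A continuous map `g : X → Y` is *not proper at* `y ∈ Y` if there is no
    neighborhood `U` of `y` such that `g ⁻¹(cl U)` is compact. -/
def NotProperAt {X Y : Type*} [TopologicalSpace X] [TopologicalSpace Y]
    (g : X → Y) (y : Y) : Prop :=
  ¬ ∃ U ∈ nhds y, IsCompact (g ⁻¹' closure U)

open Polynomial Set

lemma A1 (x y : ℝ) : (x * pT x y + 1) * (pF x y - (pH x y)^2 - pH x y) = pF x y := by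
  unfold pF pH pT; ring

lemma A2 (x y : ℝ) : pT x y * pF x y = pH x y * (pF x y - (pH x y)^2 - pH x y) := by
  unfold pF pH pT; ring

lemma A3 (x y : ℝ) : (pF x y)^2 * y
    = (pF x y - (pH x y)^2 - pH x y)^2 * (pF x y - (pH x y)^2) := by
  unfold pF pH pT; ring

lemma A4 (x y : ℝ) : x * (pF x y - (pH x y)^2 - pH x y)^2 * pH x y
    = pF x y * pH x y * (pH x y + 1) := by
  unfold pF pH pT; ring

def PP (S : ℝ) : ℝ[X] :=
  C (91*S^4 + 69*S^5 + 75/4*S^6) + C (-352*S^3 - 138*S^4 - 75/2*S^5) * X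
  + C (503*S^2 - 126*S^3 + 75/4*S^4) * X^2 + C (-306*S + 510*S^2 - 75*S^3) * X^3
  + C (63 - 421*S + 825/4*S^2) * X^4 + C (104 - 363/2*S) * X^5 + C (197/4) * X^6

lemma PP_eval (S h : ℝ) : (PP S).eval h =
    -h^2*(S-2*h-h^2)^2 - 6*h^2*(h+1)*(S-2*h-h^2)*(S-h) + (S-h)^2 * pU (S-h) h := by
  simp [PP, pU]; ring

lemma PP_deriv_eval (S h : ℝ) : (PP S).derivative.eval h =
    (-352*S^3 - 138*S^4 - 75/2*S^5) + (1006*S^2 - 252*S^3 + 75/2*S^4)*h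
    + (-918*S + 1530*S^2 - 225*S^3)*h^2 + (252 - 1684*S + 825*S^2)*h^3
    + (520 - 1815/2*S)*h^4 + 591/2*h^5 := by
  simp only [PP, derivative_add, derivative_C_mul, derivative_X_pow, derivative_C,
    derivative_X, eval_add, eval_mul, eval_C, eval_X, eval_pow, mul_one, zero_add]
  push_cast
  ring

lemma M_neg (S h : ℝ) (hf : S - h ≠ 0) :
    (PP S).derivative.eval h * (S - h) + 2 * (PP S).eval h < 0 := by
  have key : (PP S).derivative.eval h * (S - h) + 2 * (PP S).eval h
      = -2*(h^2*(h+1) - h*(S-h) - (S-h)^2*(15*h+13)/2)^2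
        - (S-h)^4*((15*h+13)^2+2)/2 := by
    rw [PP_eval, PP_deriv_eval]; unfold pU; ring
  rw [key]
  have h1 : 0 < (S-h)^4 := by positivity
  nlinarith [sq_nonneg (h^2*(h+1) - h*(S-h) - (S-h)^2*(15*h+13)/2), sq_nonneg (15*h+13)]

/-- `q̃` is strictly decreasing left of `S`. -/
lemma qt_anti (S : ℝ) : StrictAntiOn (fun h : ℝ => (PP S).eval h / (S - h)^2) (Iio S) := by
  apply strictAntiOn_of_deriv_neg (convex_Iio S)
  · apply ContinuousOn.div ((PP S).continuous_aeval.continuousOn)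
    · fun_prop
    · intro x hx
      have : S - x ≠ 0 := sub_ne_zero.mpr (LT.lt.ne' hx)
      positivity
  · intro x hx
    rw [interior_Iio] at hx
    have hsx : 0 < S - x := sub_pos.mpr hx
    have hne : S - x ≠ 0 := ne_of_gt hsx
    have hd : HasDerivAt (fun h : ℝ => (PP S).eval h / (S - h)^2)
        (((PP S).derivative.eval x * (S-x)^2 - (PP S).eval x * (2 * (S-x)^1 * (-1)))
          / ((S-x)^2)^2) x := by
      exact ((PP S).hasDerivAt x).div (((hasDerivAt_id x).const_sub S).pow 2)
        (pow_ne_zero 2 hne)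
    rw [hd.deriv]
    apply div_neg_of_neg_of_pos
    · have : (PP S).derivative.eval x * (S-x)^2 - (PP S).eval x * (2 * (S-x)^1 * (-1))
          = (S - x) * ((PP S).derivative.eval x * (S - x) + 2 * (PP S).eval x) := by ring
      rw [this]
      exact mul_neg_of_pos_of_neg hsx (M_neg S x hne)
    · positivity

lemma qt_mono (S : ℝ) : StrictMonoOn (fun h : ℝ => (PP S).eval h / (S - h)^2) (Ioi S) := by
  apply strictMonoOn_of_deriv_pos (convex_Ioi S)
  · apply ContinuousOn.div ((PP S).continuous_aeval.continuousOn)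
    · fun_prop
    · intro x hx
      have : S - x ≠ 0 := sub_ne_zero.mpr (LT.lt.ne hx)
      positivity
  · intro x hx
    rw [interior_Ioi] at hx
    have hsx : S - x < 0 := sub_neg.mpr hx
    have hne : S - x ≠ 0 := ne_of_lt hsx
    have hd : HasDerivAt (fun h : ℝ => (PP S).eval h / (S - h)^2)
        (((PP S).derivative.eval x * (S-x)^2 - (PP S).eval x * (2 * (S-x)^1 * (-1)))
          / ((S-x)^2)^2) x := by
      exact ((PP S).hasDerivAt x).div (((hasDerivAt_id x).const_sub S).pow 2)
        (pow_ne_zero 2 hne)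
    rw [hd.deriv]
    apply div_pos
    · have : (PP S).derivative.eval x * (S-x)^2 - (PP S).eval x * (2 * (S-x)^1 * (-1))
          = (S - x) * ((PP S).derivative.eval x * (S - x) + 2 * (PP S).eval x) := by ring
      rw [this]
      exact mul_pos_of_neg_of_neg hsx (M_neg S x hne)
    · have : (S-x)^2 > 0 := by positivity
      positivity

/-- Basic consequences for a point in the fiber. -/
lemma fiber_props (s x y : ℝ) (hs0 : s ≠ 0) (hs1 : s ≠ -1)
    (hp : pinchuk (x, y) = Phi s) :
    pF x y = (s^2+2*s) - pH x y ∧ pF x y ≠ 0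
      ∧ pF x y - (pH x y)^2 - pH x y ≠ 0
      ∧ (-(pH x y)^2*((s^2+2*s)-2*(pH x y)-(pH x y)^2)^2
        - 6*(pH x y)^2*(pH x y+1)*((s^2+2*s)-2*(pH x y)-(pH x y)^2)*((s^2+2*s)-(pH x y))
        + ((s^2+2*s)-(pH x y))^2 * pU ((s^2+2*s)-(pH x y)) (pH x y)
        = pU (s^2+s) s * ((s^2+2*s)-(pH x y))^2)
      ∧ pH x y ≠ s := by
  rw [Prod.ext_iff] at hp
  obtain ⟨hp1, hp2⟩ := hp
  simp only [pinchuk, Phi] at hp1 hp2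
  have hf_eq : pF x y = (s^2+2*s) - pH x y := by linarith
  have hf0 : pF x y ≠ 0 := by
    intro h0
    -- then pH x y = 0 or -1
    have hA := A1 x y
    rw [h0] at hA
    have hcase : pH x y = 0 ∨ pH x y = -1 := by
      rcases mul_eq_zero.mp hA with h | h
      · left; show pH x y = 0
        have : pH x y = pT x y * (x * pT x y + 1) := rfl
        rw [this, h, mul_zero]
      · have : pH x y * (pH x y + 1) = 0 := by linarith
        rcases mul_eq_zero.mp this with h' | h'
        · exact Or.inl h'
        · right; linarith
    rcases hcase with h | h
    · -- S = 0, so s = -2, then q = -t^2 = 208, absurd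
      rw [h, h0] at hp1
      have hs2 : s = -2 := by
        have : s * (s + 2) = 0 := by linarith
        rcases mul_eq_zero.mp this with h' | h'
        · exact absurd h' hs0
        · linarith
      rw [h, h0] at hp2
      rw [hs2] at hp2
      norm_num [pU] at hp2
      nlinarith [sq_nonneg (pT x y), hp2]
    · rw [h, h0] at hp1
      have : (s+1)^2 = 0 := by linarith
      have : s + 1 = 0 := by
        exact pow_eq_zero_iff (n := 2) (by norm_num) |>.mp this
      exact hs1 (by linarith)
  have hd0 : pF x y - (pH x y)^2 - pH x y ≠ 0 := by
    intro h0
    have hA := A1 x y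
    rw [h0, mul_zero] at hA
    exact hf0 hA.symm
  refine ⟨hf_eq, hf0, hd0, ?_, ?_⟩
  · have hA2 := A2 x y
    rw [hf_eq] at hA2
    rw [hf_eq] at hp2
    simp only [pU] at hp2 ⊢
    linear_combination ((s^2+2*s)-(pH x y))^2 * hp2
      + (pT x y * ((s^2+2*s)-pH x y) + pH x y * ((s^2+2*s)-2*(pH x y)-(pH x y)^2)
         + 6*((s^2+2*s)-pH x y)*(pH x y)*((pH x y)+1)) * hA2
  · intro hhs
    apply hd0
    rw [hf_eq, hhs]; ring

/-- The value at the special root `h = s`. -/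
lemma PP_at_s (s : ℝ) : (PP (s^2+2*s)).eval s = pU (s^2+s) s * (s^2+s)^2 := by
  rw [PP_eval]
  simp only [pU]
  ring

lemma uniq (s : ℝ) (hs0 : s ≠ 0) (hs1 : s ≠ -1) (w₁ w₂ : ℝ × ℝ)
    (h1 : pinchuk w₁ = Phi s) (h2 : pinchuk w₂ = Phi s) : w₁ = w₂ := by
  obtain ⟨x₁, y₁⟩ := w₁
  obtain ⟨x₂, y₂⟩ := w₂
  set S : ℝ := s^2+2*s with hS
  set Q : ℝ := pU (s^2+s) s with hQ
  have hss : s^2 + s ≠ 0 := by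
    intro h; rcases mul_eq_zero.mp (show s * (s+1) = 0 by linarith) with h' | h'
    exacts [hs0 h', hs1 (by linarith)]
  obtain ⟨hf1, hf01, hd01, hg1, hhs1⟩ := fiber_props s x₁ y₁ hs0 hs1 h1
  obtain ⟨hf2, hf02, hd02, hg2, hhs2⟩ := fiber_props s x₂ y₂ hs0 hs1 h2
  set H₁ : ℝ := pH x₁ y₁ with hH1
  set H₂ : ℝ := pH x₂ y₂ with hH2
  -- the three q̃-values equal Q
  have hfS1 : S - H₁ ≠ 0 := by rw [← hf1]; exact hf01
  have hfS2 : S - H₂ ≠ 0 := by rw [← hf2]; exact hf02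
  have hq1 : (PP S).eval H₁ / (S - H₁)^2 = Q := by
    rw [div_eq_iff (pow_ne_zero 2 hfS1), PP_eval]
    rw [← hS] at hg1
    rw [← hQ] at hg1
    linear_combination hg1
  have hq2 : (PP S).eval H₂ / (S - H₂)^2 = Q := by
    rw [div_eq_iff (pow_ne_zero 2 hfS2), PP_eval]
    rw [← hS] at hg2
    rw [← hQ] at hg2
    linear_combination hg2
  have hqs : (PP S).eval s / (S - s)^2 = Q := by
    rw [div_eq_iff (by rw [show S - s = s^2+s by rw [hS]; ring]; exact pow_ne_zero 2 hss)]
    rw [hS, PP_at_s]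
    rw [show s^2+2*s - s = s^2+s by ring, ← hQ]
  -- `s` is on one side; each `Hᵢ` must be on the other side.
  have hsd : s ≠ S := fun h => hss (by rw [hS] at h; nlinarith [h])
  have key : ∀ H : ℝ, H ≠ S → H ≠ s → (PP S).eval H / (S - H)^2 = Q →
      (s < S → S < H) ∧ (S < s → H < S) := by
    intro H hHS hHs hqH
    constructor
    · intro hsS
      by_contra hc
      push_neg at hc
      have hH : H ∈ Iio S := lt_of_le_of_ne hc hHS
      have := (qt_anti S).injOn hH (show s ∈ Iio S from hsS) (by rw [hqH, hqs])
      exact hHs this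
    · intro hSs
      by_contra hc
      push_neg at hc
      have hH : H ∈ Ioi S := lt_of_le_of_ne hc (Ne.symm hHS)
      have := (qt_mono S).injOn hH (show s ∈ Ioi S from hSs) (by rw [hqH, hqs])
      exact hHs this
  have hH1S : H₁ ≠ S := fun h => hfS1 (by rw [h, sub_self])
  have hH2S : H₂ ≠ S := fun h => hfS2 (by rw [h, sub_self])
  have k1 := key H₁ hH1S hhs1 hq1
  have k2 := key H₂ hH2S hhs2 hq2
  -- conclude H₁ = H₂
  have hHH : H₁ = H₂ := by
    rcases lt_or_gt_of_ne hsd with hsS | hSs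
    · exact (qt_mono S).injOn (k1.1 hsS) (k2.1 hsS) (by rw [hq1, hq2])
    · exact (qt_anti S).injOn (k1.2 hSs) (k2.2 hSs) (by rw [hq1, hq2])
  -- now recover equality of the points
  have hFF : pF x₁ y₁ = pF x₂ y₂ := by rw [hf1, hf2, hHH]
  have a3 := A3 x₁ y₁
  have b3 := A3 x₂ y₂
  rw [← hH1] at a3
  rw [← hH2] at b3
  rw [hFF, hHH] at a3
  have hyy : y₁ = y₂ :=
    mul_left_cancel₀ (pow_ne_zero 2 hf02) (a3.trans b3.symm)
  have hxx : x₁ = x₂ := by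
    by_cases hH0 : H₂ = 0
    · -- t = 0 on both points, x*y = 1, y = pF ≠ 0
      have t1 : pT x₁ y₁ = 0 := by
        have hA := A2 x₁ y₁
        rw [← hH1, hFF, hHH, hH0] at hA
        simp only [zero_mul] at hA
        exact (mul_eq_zero.mp hA).resolve_right hf02
      have t2 : pT x₂ y₂ = 0 := by
        have hA := A2 x₂ y₂
        rw [← hH2, hH0] at hA
        simp only [zero_mul] at hA
        exact (mul_eq_zero.mp hA).resolve_right hf02
      have hy1F : y₁ = pF x₂ y₂ := by
        apply mul_left_cancel₀ (pow_ne_zero 2 hf02)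
        rw [a3, hH0]; ring
      have hy0 : y₁ ≠ 0 := by rw [hy1F]; exact hf02
      have e1 : x₁ * y₁ = 1 := by
        have : x₁ * y₁ - 1 = 0 := t1
        linarith
      have e2 : x₂ * y₂ = 1 := by
        have : x₂ * y₂ - 1 = 0 := t2
        linarith
      rw [← hyy] at e2
      exact mul_right_cancel₀ hy0 (e1.trans e2.symm)
    · have a4 := A4 x₁ y₁
      have b4 := A4 x₂ y₂
      rw [← hH1] at a4
      rw [← hH2] at b4
      rw [hFF, hHH] at a4
      have step1 : x₁ * (pF x₂ y₂ - H₂ ^ 2 - H₂) ^ 2 * H₂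
          = x₂ * (pF x₂ y₂ - H₂ ^ 2 - H₂) ^ 2 * H₂ := a4.trans b4.symm
      have step2 := mul_right_cancel₀ hH0 step1
      exact mul_right_cancel₀ (pow_ne_zero 2 hd02) step2
  rw [hxx, hyy]

set_option maxHeartbeats 1000000 in
lemma exists_big (a5 a4 a3 a2 a1 a0 c : ℝ) :
    ∃ b : ℝ, c < b ∧ 0 < 197/4*b^6 + a5*b^5 + a4*b^4 + a3*b^3 + a2*b^2 + a1*b + a0 := by
  have hK0 : 0 ≤ abs a5 + abs a4 + abs a3 + abs a2 + abs a1 + abs a0 := by positivity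
  have habs := abs_nonneg c
  obtain ⟨b, hb⟩ : ∃ b : ℝ,
      b = 1 + |c| + 4/197*(abs a5 + abs a4 + abs a3 + abs a2 + abs a1 + abs a0) := ⟨_, rfl⟩
  refine ⟨b, by rw [hb]; linarith [le_abs_self c], ?_⟩
  have hb1 : 1 ≤ b := by rw [hb]; linarith
  have hb0 : 0 < b := lt_of_lt_of_le one_pos hb1
  have hp5 : 0 < b^5 := pow_pos hb0 5
  have hK : 197/4 + (abs a5 + abs a4 + abs a3 + abs a2 + abs a1 + abs a0) ≤ 197/4*b := by
    rw [hb]; linarith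
  have bound : ∀ (a : ℝ) (i : ℕ), i ≤ 5 → -(abs a * b^5) ≤ a*b^i := by
    intro a i hi
    calc -(abs a * b^5) = (-(abs a))*b^5 := by ring
      _ ≤ (-(abs a))*b^i :=
          mul_le_mul_of_nonpos_left (pow_le_pow_right₀ hb1 hi) (neg_nonpos.mpr (abs_nonneg a))
      _ ≤ a*b^i := mul_le_mul_of_nonneg_right (neg_abs_le a) (pow_nonneg hb0.le i)
  have hKb := mul_le_mul_of_nonneg_right hK hp5.le
  have h6 : (197/4*b)*b^5 = 197/4*b^6 := by ring
  rw [h6] at hKb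
  have b5 := bound a5 5 le_rfl
  have b4 := bound a4 4 (by norm_num)
  have b3 := bound a3 3 (by norm_num)
  have b2 := bound a2 2 (by norm_num)
  have b1 := bound a1 1 (by norm_num)
  have b0 := bound a0 0 (by norm_num)
  have e1 : a1 * b^1 = a1 * b := by ring
  have e0 : a0 * b^0 = a0 := by ring
  rw [e0] at b0
  rw [e1] at b1
  nlinarith [hKb, hp5, b5, b4, b3, b2, b1, b0]

lemma exists_root (s : ℝ) (hs0 : s ≠ 0) (hs1 : s ≠ -1) :
    ∃ r : ℝ, ((PP (s^2+2*s)).eval r = pU (s^2+s) s * ((s^2+2*s)-r)^2)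
      ∧ (s^2+2*s) - r ≠ 0 ∧ r ≠ s ∧ r ≠ -s-2 := by
  set S : ℝ := s^2+2*s with hS
  set Q : ℝ := pU (s^2+s) s with hQ
  set g : ℝ → ℝ := fun b => (PP S).eval b - Q*(S-b)^2 with hg
  have hgc : Continuous g := by
    apply Continuous.sub
    · exact (PP S).continuous_aeval
    · exact continuous_const.mul ((continuous_const.sub continuous_id).pow 2)
  have hrepr : ∀ b : ℝ, g b
      = 197/4*b^6 + (104 - 363/2*S)*b^5 + (63 - 421*S + 825/4*S^2)*b^4
        + (-306*S + 510*S^2 - 75*S^3)*b^3 + (503*S^2 - 126*S^3 + 75/4*S^4 - Q)*b^2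
        + (-352*S^3 - 138*S^4 - 75/2*S^5 + 2*Q*S)*b
        + (91*S^4 + 69*S^5 + 75/4*S^6 - Q*S^2) := by
    intro b; rw [hg]; simp [PP]; ring
  have hrepr' : ∀ b : ℝ, g (-b)
      = 197/4*b^6 + (-(104 - 363/2*S))*b^5 + (63 - 421*S + 825/4*S^2)*b^4
        + (-(-306*S + 510*S^2 - 75*S^3))*b^3 + (503*S^2 - 126*S^3 + 75/4*S^4 - Q)*b^2
        + (-(-352*S^3 - 138*S^4 - 75/2*S^5 + 2*Q*S))*b
        + (91*S^4 + 69*S^5 + 75/4*S^6 - Q*S^2) := by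
    intro b; rw [hrepr (-b)]; ring
  -- the value at the other bad point
  have hA8 : g (-s-2) = 2*(s+1)^5*(s+2)^2*(75*s^2+150*s+104) := by
    rw [hg]; simp only; rw [PP_eval, hS, hQ]; simp only [pU]; ring
  have hfin : ∀ r : ℝ, g r = 0 → ¬ (s = -2) → r ≠ -s-2 := by
    intro r hr hs2 hrr
    rw [hrr] at hr
    rw [hA8] at hr
    have h1 : (s+1)^5 ≠ 0 := pow_ne_zero 5 (fun h => hs1 (by linarith))
    have h2 : (s+2)^2 ≠ 0 := pow_ne_zero 2 (fun h => hs2 (by linarith))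
    have h3 : (75*s^2+150*s+104) ≠ 0 := by nlinarith [sq_nonneg (s+1)]
    exact (mul_ne_zero (mul_ne_zero (mul_ne_zero two_ne_zero h1) h2) h3) hr
  by_cases hs2 : s = -2
  · -- special case s = -2 : S = 0, Q = 208
    subst hs2
    have hS0 : S = 0 := by rw [hS]; norm_num
    have hQ208 : Q = 208 := by rw [hQ]; norm_num [pU]
    have ga : g (1/2) < 0 := by
      rw [hrepr, hS0, hQ208]; norm_num
    have gb : (0:ℝ) < g 2 := by
      rw [hrepr, hS0, hQ208]; norm_num
    have := intermediate_value_Ioo (by norm_num : (1/2:ℝ) ≤ 2) hgc.continuousOn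
      (show (0:ℝ) ∈ Ioo (g (1/2)) (g 2) from ⟨ga, gb⟩)
    obtain ⟨r, hrmem, hr0⟩ := this
    refine ⟨r, ?_, ?_, ?_, ?_⟩
    · have : (PP S).eval r - Q*(S-r)^2 = 0 := hr0
      linarith
    · rw [hS0]; simp only [zero_sub, neg_ne_zero]
      exact ne_of_gt (lt_trans (by norm_num) hrmem.1)
    · intro h; rw [h] at hrmem; exact absurd hrmem.1 (by norm_num)
    · intro h; rw [h] at hrmem; norm_num at hrmem
  · -- s ≠ -2 : use the endpoint S and a far endpoint
    have hgS : g S = -(s^4*(s+1)^4*(s+2)^4) := by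
      rw [hg]; simp only; rw [PP_eval, hS, hQ]; simp only [pU]; ring
    have hs2pos : 0 < s^2 := by
      rcases lt_or_gt_of_ne hs0 with h | h
      · nlinarith
      · nlinarith
    have hs1pos : 0 < (s+1)^2 := by
      rcases lt_or_gt_of_ne (fun h => hs1 (by linarith) : s + 1 ≠ 0) with h | h
      · nlinarith
      · nlinarith
    have hs2pos' : 0 < (s+2)^2 := by
      rcases lt_or_gt_of_ne (fun h => hs2 (by linarith) : s + 2 ≠ 0) with h | h
      · nlinarith
      · nlinarith
    have hgSneg : g S < 0 := by
      rw [hgS]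
      have h1 : 0 < s^4*(s+1)^4*(s+2)^4 := by
        apply mul_pos (mul_pos _ _)
        · nlinarith [hs2pos']
        · nlinarith [hs2pos]
        · nlinarith [hs1pos]
      linarith
    have hss : s^2 + s ≠ 0 := by
      intro h; rcases mul_eq_zero.mp (show s * (s+1) = 0 by linarith) with h' | h'
      exacts [hs0 h', hs1 (by linarith)]
    rcases lt_or_gt_of_ne hss with hneg | hpos
    · -- s² + s < 0 : S < s ; pick r < S
      have hsS : S < s := by rw [hS]; nlinarith
      obtain ⟨b, hbS, hbpos⟩ := exists_big (-(104 - 363/2*S)) (63 - 421*S + 825/4*S^2)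
        (-(-306*S + 510*S^2 - 75*S^3)) (503*S^2 - 126*S^3 + 75/4*S^4 - Q)
        (-(-352*S^3 - 138*S^4 - 75/2*S^5 + 2*Q*S)) (91*S^4 + 69*S^5 + 75/4*S^6 - Q*S^2) (-S)
      rw [← hrepr' b] at hbpos
      have hbS' : -b < S := by linarith
      have := intermediate_value_Ioo' (le_of_lt hbS') hgc.continuousOn
        (show (0:ℝ) ∈ Ioo (g S) (g (-b)) from ⟨hgSneg, hbpos⟩)
      obtain ⟨r, hrmem, hr0⟩ := this
      have hrS : r < S := hrmem.2
      refine ⟨r, by linarith [(show (PP S).eval r - Q*(S-r)^2 = 0 from hr0)], ?_, ?_, hfin r hr0 hs2⟩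
      · exact ne_of_gt (by linarith : 0 < S - r)
      · intro h; rw [h] at hrS; linarith
    · -- s² + s > 0 : s < S ; pick r > S
      have hsS : s < S := by rw [hS]; nlinarith
      obtain ⟨b, hbS, hbpos⟩ := exists_big (104 - 363/2*S) (63 - 421*S + 825/4*S^2)
        (-306*S + 510*S^2 - 75*S^3) (503*S^2 - 126*S^3 + 75/4*S^4 - Q)
        (-352*S^3 - 138*S^4 - 75/2*S^5 + 2*Q*S) (91*S^4 + 69*S^5 + 75/4*S^6 - Q*S^2) S
      rw [← hrepr b] at hbpos
      have := intermediate_value_Ioo (le_of_lt hbS) hgc.continuousOn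
        (show (0:ℝ) ∈ Ioo (g S) (g b) from ⟨hgSneg, hbpos⟩)
      obtain ⟨r, hrmem, hr0⟩ := this
      have hrS : S < r := hrmem.1
      refine ⟨r, by linarith [(show (PP S).eval r - Q*(S-r)^2 = 0 from hr0)], ?_, ?_, hfin r hr0 hs2⟩
      · exact ne_of_lt (by linarith : S - r < 0)
      · intro h; rw [h] at hrS; linarith

lemma construct (s r : ℝ)
    (hg : -r^2*((s^2+2*s)-2*r-r^2)^2
        - 6*r^2*(r+1)*((s^2+2*s)-2*r-r^2)*((s^2+2*s)-r)
        + ((s^2+2*s)-r)^2 * pU ((s^2+2*s)-r) r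
        = pU (s^2+s) s * ((s^2+2*s)-r)^2)
    (hf : (s^2+2*s) - r ≠ 0) (hd : (s^2+2*s) - 2*r - r^2 ≠ 0) :
    pinchuk (((s^2+2*s)-r)*(r+1)/((s^2+2*s)-2*r-r^2)^2,
             ((s^2+2*s)-2*r-r^2)^2*(((s^2+2*s)-r)-r^2)/((s^2+2*s)-r)^2) = Phi s := by
  set S := s^2+2*s with hS
  set x : ℝ := (S-r)*(r+1)/(S-2*r-r^2)^2 with hx
  set y : ℝ := (S-2*r-r^2)^2*((S-r)-r^2)/(S-r)^2 with hy
  have hd2 : S - r*2 - r^2 ≠ 0 := by intro h; apply hd; linarith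
  have ht : pT x y = r*(S-2*r-r^2)/(S-r) := by
    rw [pT, hx, hy]; field_simp; ring
  have ha : x * pT x y + 1 = (S-r)/(S-2*r-r^2) := by
    rw [ht, hx]; field_simp; ring
  have hH : pH x y = r := by
    rw [pH, ha, ht]; field_simp
  have hF : pF x y = S - r := by
    rw [pF, ha, ht, hy]; field_simp; ring
  simp only [pinchuk]
  rw [hH, hF, ht, Phi, Prod.mk.injEq]
  constructor
  · rw [hS]; ring
  · have expand : (-(r*(S-2*r-r^2)/(S-r))^2 - 6*(r*(S-2*r-r^2)/(S-r))*r*(r+1)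
        + pU (S-r) r) * (S-r)^2
        = -r^2*(S-2*r-r^2)^2 - 6*r^2*(r+1)*(S-2*r-r^2)*(S-r) + (S-r)^2 * pU (S-r) r := by
      field_simp
    apply mul_right_cancel₀ (pow_ne_zero 2 hf)
    rw [expand, hg]

lemma exists_pre (s : ℝ) (hs0 : s ≠ 0) (hs1 : s ≠ -1) : ∃ w, pinchuk w = Phi s := by
  obtain ⟨r, hgr, hf, hrs, hrs2⟩ := exists_root s hs0 hs1
  have hd : (s^2+2*s) - 2*r - r^2 ≠ 0 := by
    have hfac : (s^2+2*s) - 2*r - r^2 = -((r - s)*(r + s + 2)) := by ring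
    rw [hfac, neg_ne_zero]
    exact mul_ne_zero (sub_ne_zero.mpr hrs) (fun h => hrs2 (by linarith))
  refine ⟨_, construct s r ?_ hf hd⟩
  rw [PP_eval] at hgr
  linear_combination hgr

/-- For every `v ∈ C \ {(-1,0), (0,0)}`, the fiber `F⁻¹(v)` of Pinchuk's map has
    exactly one element. -/
theorem pinchuk_fiber_one_on_curve :
    ∀ v ∈ Set.range Phi \ {((-1 : ℝ), (0 : ℝ)), ((0 : ℝ), (0 : ℝ))},
      ∃! w : ℝ × ℝ, pinchuk w = v := by
  rintro v ⟨⟨s, rfl⟩, hnot⟩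
  have hs0 : s ≠ 0 := by
    rintro rfl
    apply hnot
    have : Phi 0 = ((0:ℝ), (0:ℝ)) := by norm_num [Phi, pU]
    rw [this]
    simp
  have hs1 : s ≠ -1 := by
    rintro rfl
    apply hnot
    have : Phi (-1) = ((-1:ℝ), (0:ℝ)) := by norm_num [Phi, pU]
    rw [this]
    simp
  obtain ⟨w, hw⟩ := exists_pre s hs0 hs1
  exact ⟨w, hw, fun w' hw' => uniq s hs0 hs1 w' w hw' hw⟩
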